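/- Let k be a field of characteristic p, d ≥ 1 with p ≡ 1 (mod d), and write p − 1 = r d. Let i_1, …, i_n be positive integers with i_1 + ⋯ + i_n = d. If j_1, …, j_{n-1} are natural numbers with j_1 + ⋯ + j_{n-1} = r(d − i_n) and d·j_k < p·i_k for all 1 ≤ k ≤ n−1, then j_k = r·i_k for all k. Moreover, the multinomial coefficient (r(d − i_n))!/((r i_1)! ⋯ (r i_{n-1})!) is not divisible by p. -/
import Mathlib


/-- Let `p` be a prime with `p ≡ 1 (mod d)`, `d ≥ 1`, `p - 1 = r * d`.  Let
`i : Fin (n+1) → ℕ` be positive with `∑ i = d`.  If `j : Fin n → ℕ` satisfies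
`∑ j = r * (d - i_last)` and `d * j k < p * i k` for all `k : Fin n` (`i k` meaning
`i (k.castSucc)`), then `j k = r * i k` for all such `k`; moreover the multinomial
coefficient `(r (d - i_last))! / ∏ (r * i k)!` is not divisible by `p`. -/
theorem stmt19 (p d r n : ℕ) (hp : p.Prime) (hd : 1 ≤ d) (hmod : p % d = 1)
    (hr : p - 1 = r * d)
    (i : Fin (n + 1) → ℕ) (hipos : ∀ k, 0 < i k) (hisum : ∑ k, i k = d)
    (j : Fin n → ℕ) (hjsum : ∑ k, j k = r * (d - i (Fin.last n)))
    (hjlt : ∀ k : Fin n, d * j k < p * i k.castSucc) :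
    (∀ k : Fin n, j k = r * i k.castSucc) ∧
      ¬ p ∣ Nat.multinomial Finset.univ (fun k : Fin n => r * i k.castSucc) := by
  have hp1 : 1 ≤ p := hp.one_lt.le
  have hpeq : p = r * d + 1 := by omega
  have hS : ∑ k : Fin n, i k.castSucc + i (Fin.last n) = d := by
    rw [← hisum, Fin.sum_univ_castSucc]
  have hik : ∀ k : Fin n, i k.castSucc ≤ d := by
    intro k
    have := Finset.single_le_sum (f := i) (fun k _ => Nat.zero_le _)
      (Finset.mem_univ k.castSucc)
    omega
  -- each j k ≤ r * i k
  have hle : ∀ k : Fin n, j k ≤ r * i k.castSucc := by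
    intro k
    have h := hjlt k
    rw [hpeq] at h
    have : d * j k < d * (r * i k.castSucc + 1) := by
      have := hik k
      ring_nf at h ⊢
      nlinarith
    have := Nat.lt_of_mul_lt_mul_left this
    omega
  have hsum2 : ∑ k : Fin n, r * i k.castSucc = r * (d - i (Fin.last n)) := by
    rw [← Finset.mul_sum]
    congr 1
    omega
  have heq : ∀ k : Fin n, j k = r * i k.castSucc := by
    intro k
    by_contra hne
    have hlt : j k < r * i k.castSucc := lt_of_le_of_ne (hle k) hne
    have : ∑ k : Fin n, j k < ∑ k : Fin n, r * i k.castSucc :=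
      Finset.sum_lt_sum (fun k _ => hle k) ⟨k, Finset.mem_univ k, hlt⟩
    omega
  refine ⟨heq, ?_⟩
  intro hdvd
  have hmdvd : Nat.multinomial Finset.univ (fun k : Fin n => r * i k.castSucc) ∣
      Nat.factorial (∑ k : Fin n, r * i k.castSucc) :=
    ⟨_, by rw [mul_comm]; exact (Nat.multinomial_spec _ _).symm⟩
  have hpf : p ∣ Nat.factorial (∑ k : Fin n, r * i k.castSucc) := hdvd.trans hmdvd
  have hple := (Nat.Prime.dvd_factorial hp).mp hpf
  have hsle : ∑ k : Fin n, r * i k.castSucc ≤ r * d := by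
    rw [hsum2]
    exact Nat.mul_le_mul_left r (Nat.sub_le _ _)
  omega
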